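/- Periodic orbits in a cone around a curve of fixed points are fixed points on the curve (Lemma 5.8). Let U be an open connected neighborhood of 0 ∈ ℝ² with coordinates (z, ρ), and let P : U → ℝ² be real-analytic on U such that P(z, 0) = (z, 0) and P(0, ρ) = (0, ρ) whenever these points lie in U, and P is not the identity map of U. Then there exist N ∈ ℕ and δ > 0 such that every periodic orbit of P contained in the cone Σ_{N,δ} = {(z, ρ) : |z| < ρᴺ, 0 < ρ < δ} consists of fixed points lying on {z = 0}: if p₀, …, p_{m−1} ∈ Σ_{N,δ} satisfy P(p_i) = p_{(i+1) mod m}, then every p_i has z-coordinate 0 (hence P(p_i) = p_i). -/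

import Mathlib

set_option maxHeartbeats 1000000

open Finset

private lemma eq_zero_of_abs_le_lin {x K z₀ : ℝ} (hz₀ : 0 < z₀) (hK : 0 ≤ K)
    (h : ∀ z : ℝ, 0 < z → z < z₀ → |x| ≤ K * z) : x = 0 := by
  by_contra hx
  have hx' : 0 < |x| := abs_pos.mpr hx
  set z : ℝ := min (z₀ / 2) (|x| / (2 * (K + 1))) with hz
  have hzpos : 0 < z := lt_min (by linarith) (by positivity)
  have h1 : |x| ≤ K * z := h z hzpos (lt_of_le_of_lt (min_le_left _ _) (by linarith))
  have h2 : z ≤ |x| / (2 * (K + 1)) := min_le_right _ _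
  have h3 : K * z ≤ K * (|x| / (2 * (K + 1))) := mul_le_mul_of_nonneg_left h2 hK
  have h4 : K * (|x| / (2 * (K + 1))) ≤ |x| / 2 := by
    have e : K * (|x| / (2 * (K + 1))) = K * |x| / (2 * (K + 1)) := by ring
    rw [e, div_le_div_iff₀ (by positivity) (by norm_num)]
    nlinarith [abs_nonneg x]
  linarith

private lemma onevar_coeffs_zero (a : ℕ → ℝ) (C R : ℝ) (hC : 0 < C) (hR : 0 < R)
    (hb : ∀ n, |a n| ≤ C / R ^ n) (r : ℝ) (hr : 0 < r)
    (hsum : ∀ z : ℝ, 0 < z → z < r → HasSum (fun n => a n * z ^ n) 0) :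
    ∀ n, a n = 0 := by
  intro n
  induction n using Nat.strong_induction_on with
  | _ n ih =>
  set z₀ : ℝ := min r (R / 2) with hz₀
  have hz₀pos : 0 < z₀ := lt_min hr (by positivity)
  have key : ∀ z : ℝ, 0 < z → z < z₀ → |a n| ≤ (2 * C / R ^ (n + 1)) * z := by
    intro z hz hzlt
    have hzr : z < r := lt_of_lt_of_le hzlt (min_le_left _ _)
    have hzR : z ≤ R / 2 := le_of_lt (lt_of_lt_of_le hzlt (min_le_right _ _))
    have hzR' : z / R < 1 := by
      rw [div_lt_one hR]; linarith
    have hzRnn : 0 ≤ z / R := by positivity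
    have hf := hsum z hz hzr
    set f : ℕ → ℝ := fun k => a k * z ^ k with hfdef
    -- sum of first n+1 terms is f n
    have hsum_first : ∑ i ∈ range (n + 1), f i = f n := by
      refine Finset.sum_eq_single_of_mem n (self_mem_range_succ n) ?_
      intro i hi hne
      have : i < n := lt_of_le_of_ne (Nat.lt_succ_iff.mp (mem_range.mp hi)) hne
      simp [hfdef, ih i this]
    have hshift : HasSum (fun k => f (k + (n + 1))) (0 - ∑ i ∈ range (n + 1), f i) :=
      (hasSum_nat_add_iff' (n + 1)).mpr hf
    rw [hsum_first, zero_sub] at hshift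
    -- bound the tail
    have hble : ∀ k : ℕ, ‖f (k + (n + 1))‖ ≤ (C * (z / R) ^ (n + 1)) * (z / R) ^ k := by
      intro k
      have h1 : |f (k + (n + 1))| ≤ (C / R ^ (k + (n + 1))) * z ^ (k + (n + 1)) := by
        rw [hfdef]
        rw [abs_mul, abs_pow, abs_of_pos hz]
        exact mul_le_mul_of_nonneg_right (hb _) (by positivity)
      have h2 : (C / R ^ (k + (n + 1))) * z ^ (k + (n + 1)) =
          (C * (z / R) ^ (n + 1)) * (z / R) ^ k := by
        rw [div_pow, div_pow]
        field_simp
        ring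
      rw [Real.norm_eq_abs, ← h2] at *
      exact h1
    have hbsum : Summable (fun k : ℕ => (C * (z / R) ^ (n + 1)) * (z / R) ^ k) :=
      (summable_geometric_of_lt_one hzRnn hzR').mul_left _
    have htail_summ : Summable (fun k => f (k + (n + 1))) :=
      Summable.of_norm_bounded hbsum hble
    have htsum : ∑' k, f (k + (n + 1)) = -f n := hshift.tsum_eq
    have habs : |f n| ≤ (C * (z / R) ^ (n + 1)) * (1 - z / R)⁻¹ := by
      have h3 : ‖∑' k, f (k + (n + 1))‖ ≤ ∑' k, ‖f (k + (n + 1))‖ :=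
        norm_tsum_le_tsum_norm (htail_summ.abs.congr (fun k => (Real.norm_eq_abs _).symm))
      have h4 : ∑' k, ‖f (k + (n + 1))‖ ≤ ∑' k, (C * (z / R) ^ (n + 1)) * (z / R) ^ k :=
        Summable.tsum_le_tsum hble (htail_summ.norm) hbsum
      have h5 : ∑' k : ℕ, (C * (z / R) ^ (n + 1)) * (z / R) ^ k
          = (C * (z / R) ^ (n + 1)) * (1 - z / R)⁻¹ := by
        rw [tsum_mul_left, tsum_geometric_of_lt_one hzRnn hzR']
      calc |f n| = ‖∑' k, f (k + (n + 1))‖ := by rw [htsum, Real.norm_eq_abs, abs_neg]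
        _ ≤ ∑' k, ‖f (k + (n + 1))‖ := h3
        _ ≤ _ := by rw [← h5]; exact h4
    have hinv : (1 - z / R)⁻¹ ≤ 2 := by
      have h0 : z / R ≤ 1 / 2 := by
        rw [div_le_div_iff₀ hR (by norm_num)]; linarith
      have h1 : (1:ℝ) / 2 ≤ 1 - z / R := by linarith
      calc (1 - z / R)⁻¹ ≤ ((1:ℝ)/2)⁻¹ := by
            apply inv_anti₀ (by norm_num) h1
        _ = 2 := by norm_num
    have h6 : |f n| ≤ 2 * C * (z / R) ^ (n + 1) := by
      calc |f n| ≤ (C * (z / R) ^ (n + 1)) * (1 - z / R)⁻¹ := habs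
        _ ≤ (C * (z / R) ^ (n + 1)) * 2 := by
            exact mul_le_mul_of_nonneg_left hinv (by positivity)
        _ = 2 * C * (z / R) ^ (n + 1) := by ring
    -- |a n| * z^n ≤ 2C z^{n+1}/R^{n+1}
    have h7 : |a n| * z ^ n ≤ 2 * C * (z / R) ^ (n + 1) := by
      have : |f n| = |a n| * z ^ n := by
        rw [hfdef]; rw [abs_mul, abs_pow, abs_of_pos hz]
      rwa [this] at h6
    have hzn : (0:ℝ) < z ^ n := by positivity
    rw [← le_div_iff₀ hzn] at h7 -- |a n| ≤ 2C (z/R)^{n+1} / z^n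
    calc |a n| ≤ 2 * C * (z / R) ^ (n + 1) / z ^ n := h7
      _ = (2 * C / R ^ (n + 1)) * z := by
          rw [div_pow]; field_simp; ring
  exact eq_zero_of_abs_le_lin hz₀pos (by positivity) key
open Finset
open scoped ENNReal NNReal Topology

private lemma exists_rep {F : ℝ × ℝ → ℝ} (hF : AnalyticAt ℝ F (0, 0)) :
    ∃ (a : ℕ × ℕ → ℝ) (C R : ℝ), 0 < C ∧ 0 < R ∧
      (∀ ij : ℕ × ℕ, |a ij| ≤ C / R ^ (ij.1 + ij.2)) ∧
      (∀ z ρ : ℝ, |z| < R → |ρ| < R →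
        HasSum (fun ij : ℕ × ℕ => a ij * z ^ ij.1 * ρ ^ ij.2) (F (z, ρ))) := by
  obtain ⟨p, hp⟩ := hF
  obtain ⟨r, hpr⟩ := hp
  obtain ⟨r₀, hr₀pos', hr₀lt⟩ := ENNReal.lt_iff_exists_nnreal_btwn.mp hpr.r_pos
  have hr₀pos : (0:ℝ) < (r₀:ℝ) := by
    have := hr₀pos'
    simp only [ENNReal.coe_pos] at this ⊢
    exact_mod_cast this
  have hrad : (r₀ : ℝ≥0∞) < p.radius := lt_of_lt_of_le hr₀lt hpr.r_le
  obtain ⟨C₀, hC₀, hpb⟩ := p.norm_mul_pow_le_of_lt_radius hrad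
  set e1 : ℝ × ℝ := (1, 0) with he1def
  set e2 : ℝ × ℝ := (0, 1) with he2def
  set a' : ℕ → ℕ → ℝ := fun n i =>
    ∑ s ∈ univ.filter (fun s : Finset (Fin n) => s.card = i),
      p n (s.piecewise (fun _ => e1) (fun _ => e2)) with ha'def
  have hbound : ∀ n i : ℕ, |a' n i| ≤ C₀ / ((r₀:ℝ)/2) ^ n := by
    intro n i
    have hterm : ∀ s : Finset (Fin n),
        |p n (s.piecewise (fun _ => e1) (fun _ => e2))| ≤ ‖p n‖ := by
      intro s
      have h1 : ‖p n (s.piecewise (fun _ => e1) (fun _ => e2))‖ ≤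
          ‖p n‖ * ∏ l : Fin n, ‖s.piecewise (fun _ => e1) (fun _ => e2) l‖ :=
        (p n).le_opNorm _
      have h2 : ∏ l : Fin n, ‖s.piecewise (fun _ => e1) (fun _ => e2) l‖ = 1 := by
        apply Finset.prod_eq_one
        intro l _
        by_cases hl : l ∈ s
        · rw [Finset.piecewise_eq_of_mem _ _ _ hl]
          rw [he1def, Prod.norm_def]
          simp
        · rw [Finset.piecewise_eq_of_notMem _ _ _ hl]
          rw [he2def, Prod.norm_def]
          simp
      rw [h2, mul_one] at h1
      exact h1
    have hcard : (univ.filter (fun s : Finset (Fin n) => s.card = i)).card ≤ 2 ^ n := by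
      calc (univ.filter (fun s : Finset (Fin n) => s.card = i)).card
          ≤ (univ : Finset (Finset (Fin n))).card := Finset.card_filter_le _ _
        _ = 2 ^ n := by rw [Finset.card_univ, Fintype.card_finset, Fintype.card_fin]
    have h3 : |a' n i| ≤ 2 ^ n * ‖p n‖ := by
      calc |a' n i| ≤ ∑ s ∈ univ.filter (fun s : Finset (Fin n) => s.card = i),
            |p n (s.piecewise (fun _ => e1) (fun _ => e2))| := Finset.abs_sum_le_sum_abs _ _
        _ ≤ ∑ s ∈ univ.filter (fun s : Finset (Fin n) => s.card = i), ‖p n‖ :=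
            Finset.sum_le_sum (fun s _ => hterm s)
        _ = (univ.filter (fun s : Finset (Fin n) => s.card = i)).card * ‖p n‖ := by
            rw [Finset.sum_const, nsmul_eq_mul]
        _ ≤ 2 ^ n * ‖p n‖ := by
            apply mul_le_mul_of_nonneg_right _ (norm_nonneg _)
            exact_mod_cast hcard
    have h4 : ‖p n‖ ≤ C₀ / (r₀:ℝ) ^ n := by
      rw [le_div_iff₀ (by positivity)]
      exact hpb n
    calc |a' n i| ≤ 2 ^ n * ‖p n‖ := h3
      _ ≤ 2 ^ n * (C₀ / (r₀:ℝ) ^ n) := by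
          exact mul_le_mul_of_nonneg_left h4 (by positivity)
      _ = C₀ / ((r₀:ℝ)/2) ^ n := by
          rw [div_pow]
          rw [eq_comm, div_div_eq_mul_div]
          ring
  refine ⟨fun ij => a' (ij.1 + ij.2) ij.1, C₀, (r₀:ℝ)/2, hC₀, by positivity,
    fun ij => hbound _ _, ?_⟩
  · -- HasSum
    intro z ρ hz hρ
    set q : ℝ × ℝ := (z, ρ) with hqdef
    set f : ℕ × ℕ → ℝ := fun ij => a' (ij.1 + ij.2) ij.1 * z ^ ij.1 * ρ ^ ij.2 with hfdef
    have hR2 : (r₀:ℝ)/2 < (r₀:ℝ) := by linarith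
    have hqnorm : ‖q‖ < (r₀:ℝ) := by
      rw [hqdef, Prod.norm_def]
      simp only [Real.norm_eq_abs]
      exact max_lt (lt_trans hz hR2) (lt_trans hρ hR2)
    have hmem : q ∈ Metric.eball (0 : ℝ × ℝ) r := by
      rw [mem_eball_zero_iff]
      calc (‖q‖₊ : ℝ≥0∞) < (r₀ : ℝ≥0∞) := by
            rw [ENNReal.coe_lt_coe, ← NNReal.coe_lt_coe, coe_nnnorm]
            exact hqnorm
        _ < r := hr₀lt
    have h1 : HasSum (fun n => p n fun _ => q) (F q) := by
      have h0 := hpr.hasSum hmem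
      have hqq : (0, 0) + q = q := by simp
      rwa [hqq] at h0
    -- expansion of p n on the diagonal
    have hexp : ∀ n : ℕ, (p n fun _ => q) =
        ∑ i ∈ range (n + 1), a' n i * z ^ i * ρ ^ (n - i) := by
      intro n
      have hq : (fun _ : Fin n => q) =
          (fun _ : Fin n => z • e1) + (fun _ : Fin n => ρ • e2) := by
        funext l
        show q = z • e1 + ρ • e2
        rw [hqdef, he1def, he2def]
        simp [Prod.ext_iff]
      rw [hq, (p n).map_add_univ]
      have hstep : ∀ s : Finset (Fin n),
          p n (s.piecewise (fun _ => z • e1) (fun _ => ρ • e2)) =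
            (z ^ s.card * ρ ^ (n - s.card)) • p n (s.piecewise (fun _ => e1) (fun _ => e2)) := by
        intro s
        have harg : s.piecewise (fun _ => z • e1) (fun _ => ρ • e2) =
            fun l => (s.piecewise (fun _ => z) (fun _ => ρ) l) •
              (s.piecewise (fun _ => e1) (fun _ => e2) l) := by
          funext l
          by_cases hl : l ∈ s
          · rw [Finset.piecewise_eq_of_mem _ _ _ hl, Finset.piecewise_eq_of_mem _ _ _ hl,
              Finset.piecewise_eq_of_mem _ _ _ hl]
          · rw [Finset.piecewise_eq_of_notMem _ _ _ hl, Finset.piecewise_eq_of_notMem _ _ _ hl,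
              Finset.piecewise_eq_of_notMem _ _ _ hl]
        rw [harg, (p n).map_smul_univ]
        congr 1
        rw [Finset.prod_piecewise]
        rw [Finset.univ_inter, Finset.prod_const, Finset.prod_const]
        congr 1
        · congr 1
          rw [← Finset.compl_eq_univ_sdiff, Finset.card_compl, Fintype.card_fin]
      calc (∑ s : Finset (Fin n), p n (s.piecewise (fun _ => z • e1) (fun _ => ρ • e2)))
          = ∑ s : Finset (Fin n),
              (z ^ s.card * ρ ^ (n - s.card)) • p n (s.piecewise (fun _ => e1) (fun _ => e2)) :=
            Finset.sum_congr rfl (fun s _ => hstep s)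
        _ = ∑ i ∈ range (n + 1), ∑ s ∈ univ.filter (fun s : Finset (Fin n) => s.card = i),
              (z ^ s.card * ρ ^ (n - s.card)) • p n (s.piecewise (fun _ => e1) (fun _ => e2)) := by
            rw [Finset.sum_fiberwise_of_maps_to]
            intro s _
            rw [mem_range, Nat.lt_succ_iff]
            calc s.card ≤ (univ : Finset (Fin n)).card := Finset.card_le_univ s
              _ = n := by rw [Finset.card_univ, Fintype.card_fin]
        _ = ∑ i ∈ range (n + 1), a' n i * z ^ i * ρ ^ (n - i) := by
            apply Finset.sum_congr rfl
            intro i _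
            have : ∀ s ∈ univ.filter (fun s : Finset (Fin n) => s.card = i),
                (z ^ s.card * ρ ^ (n - s.card)) • p n (s.piecewise (fun _ => e1) (fun _ => e2)) =
                (z ^ i * ρ ^ (n - i)) * p n (s.piecewise (fun _ => e1) (fun _ => e2)) := by
              intro s hs
              rw [Finset.mem_filter] at hs
              rw [hs.2, smul_eq_mul]
            rw [Finset.sum_congr rfl this, ← Finset.mul_sum, ha'def]
            ring
    -- summability of f
    have hzR : |z| / ((r₀:ℝ)/2) < 1 := by rw [div_lt_one (by positivity)]; exact hz
    have hρR : |ρ| / ((r₀:ℝ)/2) < 1 := by rw [div_lt_one (by positivity)]; exact hρ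
    have hbsum : Summable (fun ij : ℕ × ℕ =>
        C₀ * ((|z| / ((r₀:ℝ)/2)) ^ ij.1 * (|ρ| / ((r₀:ℝ)/2)) ^ ij.2)) := by
      apply Summable.mul_left
      exact (summable_geometric_of_lt_one (by positivity) hzR).mul_of_nonneg
        (summable_geometric_of_lt_one (by positivity) hρR)
        (fun i => by positivity) (fun j => by positivity)
    have hfle : ∀ ij : ℕ × ℕ, ‖f ij‖ ≤
        C₀ * ((|z| / ((r₀:ℝ)/2)) ^ ij.1 * (|ρ| / ((r₀:ℝ)/2)) ^ ij.2) := by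
      rintro ⟨i, j⟩
      have h1 : |f (i, j)| ≤ (C₀ / ((r₀:ℝ)/2) ^ (i + j)) * (|z| ^ i * |ρ| ^ j) := by
        rw [hfdef]
        simp only []
        rw [abs_mul, abs_mul, abs_pow, abs_pow, mul_assoc]
        exact mul_le_mul_of_nonneg_right (hbound (i+j) i) (by positivity)
      have h2 : (C₀ / ((r₀:ℝ)/2) ^ (i + j)) * (|z| ^ i * |ρ| ^ j) =
          C₀ * ((|z| / ((r₀:ℝ)/2)) ^ i * (|ρ| / ((r₀:ℝ)/2)) ^ j) := by
        rw [div_pow, div_pow, pow_add]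
        simp only [div_eq_mul_inv, mul_pow, inv_pow, mul_inv, inv_inv]
        ring
      rw [Real.norm_eq_abs, ← h2]
      exact h1
    have hsf : Summable f := Summable.of_norm_bounded hbsum hfle
    -- regroup the sum
    have hsg : Summable (fun x : (Σ n : ℕ, Finset.HasAntidiagonal.antidiagonal n) =>
        f (Finset.HasAntidiagonal.sigmaAntidiagonalEquivProd x)) :=
      Finset.HasAntidiagonal.sigmaAntidiagonalEquivProd.summable_iff.mpr hsf
    have key : ∑' ij : ℕ × ℕ, f ij = F q := by
      have e1' : ∑' ij : ℕ × ℕ, f ij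
          = ∑' x : (Σ n : ℕ, Finset.HasAntidiagonal.antidiagonal n), f (Finset.HasAntidiagonal.sigmaAntidiagonalEquivProd x) :=
        (Finset.HasAntidiagonal.sigmaAntidiagonalEquivProd.tsum_eq f).symm
      have e2' : ∑' x : (Σ n : ℕ, Finset.HasAntidiagonal.antidiagonal n), f (Finset.HasAntidiagonal.sigmaAntidiagonalEquivProd x)
          = ∑' (n : ℕ), ∑' (c : Finset.HasAntidiagonal.antidiagonal n), f ↑c :=
        Summable.tsum_sigma' (fun n => (hasSum_fintype _).summable) hsg
      have e3' : ∀ n : ℕ, (∑' (c : Finset.HasAntidiagonal.antidiagonal n), f ↑c) = (p n fun _ => q) := by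
        intro n
        rw [tsum_fintype]
        rw [Finset.sum_coe_sort (Finset.HasAntidiagonal.antidiagonal n) f]
        rw [Finset.Nat.sum_antidiagonal_eq_sum_range_succ_mk, hexp n]
        apply Finset.sum_congr rfl
        intro i hi
        rw [mem_range, Nat.lt_succ_iff] at hi
        show a' (i + (n - i)) i * z ^ i * ρ ^ (n - i) = _
        rw [Nat.add_sub_cancel' hi]
      rw [e1', e2', tsum_congr e3', h1.tsum_eq]
    rw [← key]
    exact hsf.hasSum
private lemma rep_coeff_fst_zero {F : ℝ × ℝ → ℝ} {a : ℕ × ℕ → ℝ} {C R : ℝ} (hC : 0 < C)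
    (hR : 0 < R) (hb : ∀ ij : ℕ × ℕ, |a ij| ≤ C / R ^ (ij.1 + ij.2))
    (hsum : ∀ z ρ : ℝ, |z| < R → |ρ| < R →
      HasSum (fun ij : ℕ × ℕ => a ij * z ^ ij.1 * ρ ^ ij.2) (F (z, ρ)))
    {r : ℝ} (hr : 0 < r) (hzero : ∀ z : ℝ, |z| < r → F (z, 0) = 0) :
    ∀ i, a (i, 0) = 0 := by
  apply onevar_coeffs_zero (fun i => a (i, 0)) C R hC hR
    (fun n => by simpa using hb (n, 0)) (min r R) (lt_min hr hR)
  intro z hz hzlt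
  have hzr : |z| < r := by rw [abs_of_pos hz]; exact lt_of_lt_of_le hzlt (min_le_left _ _)
  have hzR : |z| < R := by rw [abs_of_pos hz]; exact lt_of_lt_of_le hzlt (min_le_right _ _)
  have h0R : |(0:ℝ)| < R := by simpa using hR
  have hs := hsum z 0 hzR h0R
  rw [hzero z hzr] at hs
  set g : ℕ → ℕ × ℕ := fun i => (i, 0) with hgdef
  have hginj : Function.Injective g := by
    intro x y hxy
    simpa [hgdef, Prod.ext_iff] using hxy
  have hoff : ∀ x ∉ Set.range g, a x * z ^ x.1 * (0:ℝ) ^ x.2 = 0 := by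
    rintro ⟨i, j⟩ hx
    have hj : j ≠ 0 := by
      intro h
      exact hx ⟨i, by simp [hgdef, h]⟩
    simp [zero_pow hj]
  have hres := (hginj.hasSum_iff hoff).mpr hs
  have hcomp : ((fun ij : ℕ × ℕ => a ij * z ^ ij.1 * (0:ℝ) ^ ij.2) ∘ g)
      = fun i => a (i, 0) * z ^ i := by
    funext i
    simp [hgdef]
  rwa [hcomp] at hres

private lemma rep_coeff_snd_zero {F : ℝ × ℝ → ℝ} {a : ℕ × ℕ → ℝ} {C R : ℝ} (hC : 0 < C)
    (hR : 0 < R) (hb : ∀ ij : ℕ × ℕ, |a ij| ≤ C / R ^ (ij.1 + ij.2))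
    (hsum : ∀ z ρ : ℝ, |z| < R → |ρ| < R →
      HasSum (fun ij : ℕ × ℕ => a ij * z ^ ij.1 * ρ ^ ij.2) (F (z, ρ)))
    {r : ℝ} (hr : 0 < r) (hzero : ∀ ρ : ℝ, |ρ| < r → F (0, ρ) = 0) :
    ∀ j, a (0, j) = 0 := by
  apply onevar_coeffs_zero (fun j => a (0, j)) C R hC hR
    (fun n => by simpa using hb (0, n)) (min r R) (lt_min hr hR)
  intro ρ hρ hρlt
  have hρr : |ρ| < r := by rw [abs_of_pos hρ]; exact lt_of_lt_of_le hρlt (min_le_left _ _)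
  have hρR : |ρ| < R := by rw [abs_of_pos hρ]; exact lt_of_lt_of_le hρlt (min_le_right _ _)
  have h0R : |(0:ℝ)| < R := by simpa using hR
  have hs := hsum 0 ρ h0R hρR
  rw [hzero ρ hρr] at hs
  set g : ℕ → ℕ × ℕ := fun j => (0, j) with hgdef
  have hginj : Function.Injective g := by
    intro x y hxy
    simpa [hgdef, Prod.ext_iff] using hxy
  have hoff : ∀ x ∉ Set.range g, a x * (0:ℝ) ^ x.1 * ρ ^ x.2 = 0 := by
    rintro ⟨i, j⟩ hx
    have hi : i ≠ 0 := by
      intro h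
      exact hx ⟨j, by simp [hgdef, h]⟩
    simp [zero_pow hi]
  have hres := (hginj.hasSum_iff hoff).mpr hs
  have hcomp : ((fun ij : ℕ × ℕ => a ij * (0:ℝ) ^ ij.1 * ρ ^ ij.2) ∘ g)
      = fun j => a (0, j) * ρ ^ j := by
    funext j
    simp [hgdef]
  rwa [hcomp] at hres

private lemma rep_zero_fun {F : ℝ × ℝ → ℝ} {a : ℕ × ℕ → ℝ} {R : ℝ} (hR : 0 < R)
    (hsum : ∀ z ρ : ℝ, |z| < R → |ρ| < R →
      HasSum (fun ij : ℕ × ℕ => a ij * z ^ ij.1 * ρ ^ ij.2) (F (z, ρ)))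
    (hall : ∀ ij : ℕ × ℕ, a ij = 0) :
    ∀ z ρ : ℝ, |z| < R → |ρ| < R → F (z, ρ) = 0 := by
  intro z ρ hz hρ
  have hs := hsum z ρ hz hρ
  have : (fun ij : ℕ × ℕ => a ij * z ^ ij.1 * ρ ^ ij.2) = fun _ => (0:ℝ) := by
    funext ij
    simp [hall ij]
  rw [this] at hs
  exact (hs.unique hasSum_zero)

private lemma summable_halfpow : Summable (fun ij : ℕ × ℕ => ((1:ℝ)/2) ^ ij.1 * ((1:ℝ)/2) ^ ij.2) :=
  (summable_geometric_of_lt_one (by norm_num) (by norm_num)).mul_of_nonneg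
    (summable_geometric_of_lt_one (by norm_num) (by norm_num))
    (fun _ => by positivity) (fun _ => by positivity)

private lemma tsum_halfpow : ∑' ij : ℕ × ℕ, ((1:ℝ)/2) ^ ij.1 * ((1:ℝ)/2) ^ ij.2 = 4 := by
  have hin : ∀ i : ℕ, Summable (fun j : ℕ => ((1:ℝ)/2) ^ i * ((1:ℝ)/2) ^ j) :=
    fun i => (summable_geometric_of_lt_one (by norm_num) (by norm_num)).mul_left _
  rw [Summable.tsum_prod' summable_halfpow hin]
  have h1 : ∀ i : ℕ, ∑' j : ℕ, ((1:ℝ)/2) ^ i * ((1:ℝ)/2) ^ j = ((1:ℝ)/2) ^ i * 2 := by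
    intro i
    rw [tsum_mul_left, tsum_geometric_of_lt_one (by norm_num) (by norm_num)]
    norm_num
  rw [tsum_congr h1, tsum_mul_right, tsum_geometric_of_lt_one (by norm_num) (by norm_num)]
  norm_num

private lemma rep_bound {F : ℝ × ℝ → ℝ} {a : ℕ × ℕ → ℝ} {C R : ℝ} (hC : 0 < C) (hR : 0 < R)
    (hb : ∀ ij : ℕ × ℕ, |a ij| ≤ C / R ^ (ij.1 + ij.2))
    (hsum : ∀ z ρ : ℝ, |z| < R → |ρ| < R →
      HasSum (fun ij : ℕ × ℕ => a ij * z ^ ij.1 * ρ ^ ij.2) (F (z, ρ)))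
    (ha0 : ∀ i, a (i, 0) = 0) (h0a : ∀ j, a (0, j) = 0) :
    ∃ K : ℝ, 0 < K ∧ ∀ z ρ : ℝ, |z| ≤ ρ → 0 < ρ → ρ ≤ R / 2 →
      |F (z, ρ)| ≤ K * (|z| * ρ) := by
  refine ⟨16 * C / R ^ 2, by positivity, ?_⟩
  intro z ρ hzρ hρ hρR
  have hzR2 : |z| ≤ R / 2 := le_trans hzρ hρR
  have hzR : |z| < R := lt_of_le_of_lt hzR2 (by linarith)
  have hρR' : |ρ| < R := by rw [abs_of_pos hρ]; linarith
  have hs := hsum z ρ hzR hρR'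
  set f : ℕ × ℕ → ℝ := fun ij => a ij * z ^ ij.1 * ρ ^ ij.2 with hfdef
  set D : ℝ := (4 * C / R ^ 2) * (|z| * ρ) with hD
  have hDnn : 0 ≤ D := by positivity
  have hple : ∀ ij : ℕ × ℕ, |f ij| ≤ D * (((1:ℝ)/2) ^ ij.1 * ((1:ℝ)/2) ^ ij.2) := by
    rintro ⟨i, j⟩
    rcases Nat.eq_zero_or_pos i with hi | hi
    · subst hi
      have : f (0, j) = 0 := by simp [hfdef, h0a j]
      rw [this, abs_zero]
      positivity
    rcases Nat.eq_zero_or_pos j with hj | hj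
    · subst hj
      have : f (i, 0) = 0 := by simp [hfdef, ha0 i]
      rw [this, abs_zero]
      positivity
    obtain ⟨i', rfl⟩ : ∃ i', i = i' + 1 := ⟨i - 1, (Nat.succ_pred_eq_of_pos hi).symm⟩
    obtain ⟨j', rfl⟩ : ∃ j', j = j' + 1 := ⟨j - 1, (Nat.succ_pred_eq_of_pos hj).symm⟩
    have hxb : |z| ^ i' ≤ (R/2) ^ i' := pow_le_pow_left₀ (abs_nonneg z) hzR2 i'
    have hρb : ρ ^ j' ≤ (R/2) ^ j' := pow_le_pow_left₀ hρ.le hρR j'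
    have heq : (C / R ^ (i' + 1 + (j' + 1))) * ((|z| * ρ) * ((R/2) ^ i' * (R/2) ^ j'))
        = D * (((1:ℝ)/2) ^ (i' + 1) * ((1:ℝ)/2) ^ (j' + 1)) := by
      rw [hD]
      field_simp
      ring
    calc |f (i' + 1, j' + 1)|
        = |a (i' + 1, j' + 1)| * (|z| ^ (i' + 1) * ρ ^ (j' + 1)) := by
          rw [hfdef]
          rw [abs_mul, abs_mul, abs_pow, abs_pow, abs_of_pos hρ]
          ring
      _ ≤ (C / R ^ (i' + 1 + (j' + 1))) * (|z| ^ (i' + 1) * ρ ^ (j' + 1)) :=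
          mul_le_mul_of_nonneg_right (hb _) (by positivity)
      _ = (C / R ^ (i' + 1 + (j' + 1))) * ((|z| * ρ) * (|z| ^ i' * ρ ^ j')) := by ring
      _ ≤ (C / R ^ (i' + 1 + (j' + 1))) * ((|z| * ρ) * ((R/2) ^ i' * (R/2) ^ j')) := by
          apply mul_le_mul_of_nonneg_left _ (by positivity)
          apply mul_le_mul_of_nonneg_left _ (by positivity)
          exact mul_le_mul hxb hρb (by positivity) (by positivity)
      _ = D * (((1:ℝ)/2) ^ (i' + 1) * ((1:ℝ)/2) ^ (j' + 1)) := heq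
  have hfs : Summable (fun ij : ℕ × ℕ => |f ij|) :=
    Summable.of_nonneg_of_le (fun _ => abs_nonneg _) hple (summable_halfpow.mul_left D)
  have hfs' : Summable (fun ij : ℕ × ℕ => ‖f ij‖) :=
    hfs.congr (fun ij => (Real.norm_eq_abs _).symm)
  calc |F (z, ρ)| = ‖∑' ij : ℕ × ℕ, f ij‖ := by rw [hs.tsum_eq, Real.norm_eq_abs]
    _ ≤ ∑' ij : ℕ × ℕ, ‖f ij‖ := norm_tsum_le_tsum_norm hfs'
    _ ≤ ∑' ij : ℕ × ℕ, D * (((1:ℝ)/2) ^ ij.1 * ((1:ℝ)/2) ^ ij.2) :=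
        Summable.tsum_le_tsum (fun ij => by rw [Real.norm_eq_abs]; exact hple ij) hfs'
          (summable_halfpow.mul_left D)
    _ = D * 4 := by rw [tsum_mul_left, tsum_halfpow]
    _ = (16 * C / R ^ 2) * (|z| * ρ) := by rw [hD]; ring
private lemma pow_alg1 (C R x : ℝ) (hR : R ≠ 0) (m t : ℕ) :
    (C / R ^ (m + t)) * (x * (R/2) ^ t) = (C * (2/R) ^ m * x) * ((1:ℝ)/2) ^ (m + t) := by
  rw [div_pow, div_pow, div_pow, pow_add, pow_add, one_pow]
  field_simp
  ring

private lemma rep_sign {F : ℝ × ℝ → ℝ} {a : ℕ × ℕ → ℝ} {C R : ℝ} (hC : 0 < C) (hR : 0 < R)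
    (hb : ∀ ij : ℕ × ℕ, |a ij| ≤ C / R ^ (ij.1 + ij.2))
    (hsum : ∀ z ρ : ℝ, |z| < R → |ρ| < R →
      HasSum (fun ij : ℕ × ℕ => a ij * z ^ ij.1 * ρ ^ ij.2) (F (z, ρ)))
    (hne : ∃ ij : ℕ × ℕ, a ij ≠ 0) :
    ∃ (N k : ℕ) (δ ε : ℝ), 0 < N ∧ 0 < δ ∧ δ ≤ 1 ∧
      ∀ z ρ : ℝ, |z| < ρ ^ N → 0 < ρ → ρ < δ → z ≠ 0 → 0 < ε * z ^ k * F (z, ρ) := by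
  classical
  have hne' : ∃ i : ℕ, ∃ j : ℕ, a (i, j) ≠ 0 := by
    obtain ⟨⟨i, j⟩, h⟩ := hne
    exact ⟨i, j, h⟩
  set i₀ := Nat.find hne' with hi₀def
  have hi₀ : ∃ j, a (i₀, j) ≠ 0 := Nat.find_spec hne'
  have hi₀min : ∀ i < i₀, ∀ j, a (i, j) = 0 := by
    intro i hi j
    by_contra h
    exact (Nat.find_min hne' hi) ⟨j, h⟩
  set j₀ := Nat.find hi₀ with hj₀def
  have ha₀ : a (i₀, j₀) ≠ 0 := Nat.find_spec hi₀
  have hj₀min : ∀ j < j₀, a (i₀, j) = 0 := by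
    intro j hj
    by_contra h
    exact (Nat.find_min hi₀ hj) h
  set A := |a (i₀, j₀)| with hAdef
  have hA : 0 < A := abs_pos.mpr ha₀
  set E₀ : ℝ := C * (2/R) ^ (i₀ + j₀ + 1) + C * (2/R) ^ (i₀ + 1) with hE₀def
  have hE₀ : 0 < E₀ := by positivity
  set K' : ℝ := 4 * E₀ with hK'def
  have hK' : 0 < K' := by positivity
  set δ : ℝ := min (min 1 (R/2)) (A / (K' + 1)) with hδdef
  have hδpos : 0 < δ := lt_min (lt_min one_pos (by positivity)) (by positivity)
  refine ⟨j₀ + 1, i₀, δ, if 0 < a (i₀, j₀) then 1 else -1, Nat.succ_pos _, hδpos,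
    le_trans (min_le_left _ _) (min_le_left _ _), ?_⟩
  intro z ρ hzN hρ hρδ hz0
  set ε : ℝ := if 0 < a (i₀, j₀) then 1 else -1 with hεdef
  have hρ1 : ρ < 1 := lt_of_lt_of_le hρδ (le_trans (min_le_left _ _) (min_le_left _ _))
  have hρR2 : ρ ≤ R / 2 := le_of_lt (lt_of_lt_of_le hρδ (le_trans (min_le_left _ _) (min_le_right _ _)))
  have hρA : ρ < A / (K' + 1) := lt_of_lt_of_le hρδ (min_le_right _ _)
  have hzρ : |z| ≤ ρ ^ (j₀ + 1) := le_of_lt hzN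
  have hρpow : ρ ^ (j₀ + 1) ≤ ρ := pow_le_of_le_one hρ.le hρ1.le (Nat.succ_ne_zero _)
  have hzρ' : |z| ≤ ρ := le_trans hzρ hρpow
  have hzR2 : |z| ≤ R / 2 := le_trans hzρ' hρR2
  have hzR : |z| < R := lt_of_le_of_lt hzR2 (by linarith)
  have hρR : |ρ| < R := by rw [abs_of_pos hρ]; linarith
  have hs := hsum z ρ hzR hρR
  set f : ℕ × ℕ → ℝ := fun ij => a ij * z ^ ij.1 * ρ ^ ij.2 with hfdef
  set g : ℕ × ℕ → ℝ := fun ij => if ij = (i₀, j₀) then 0 else f ij with hgdef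
  have hsingle : HasSum (fun ij : ℕ × ℕ => if ij = (i₀, j₀) then f (i₀, j₀) else 0)
      (f (i₀, j₀)) := hasSum_ite_eq (i₀, j₀) (f (i₀, j₀))
  have hgsum : HasSum g (F (z, ρ) - f (i₀, j₀)) := by
    have h := hs.sub hsingle
    have heq : (fun ij : ℕ × ℕ => f ij - if ij = (i₀, j₀) then f (i₀, j₀) else 0) = g := by
      funext ij
      by_cases hij : ij = (i₀, j₀)
      · simp [hgdef, hij]
      · simp [hgdef, hij]
    rwa [heq] at h
  set E : ℝ := E₀ * (|z| ^ i₀ * ρ ^ (j₀ + 1)) with hEdef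
  have hEnn : 0 ≤ E := by positivity
  -- pointwise bound on g
  have hple : ∀ ij : ℕ × ℕ, |g ij| ≤ E * (((1:ℝ)/2) ^ ij.1 * ((1:ℝ)/2) ^ ij.2) := by
    rintro ⟨i, j⟩
    by_cases hij : (i, j) = (i₀, j₀)
    · have : g (i, j) = 0 := by simp [hgdef, hij]
      rw [this, abs_zero]
      positivity
    have hgval : g (i, j) = f (i, j) := by simp [hgdef, hij]
    rw [hgval]
    rcases lt_trichotomy i i₀ with hi | hi | hi
    · have : f (i, j) = 0 := by simp [hfdef, hi₀min i hi j]
      rw [this, abs_zero]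
      positivity
    · subst hi
      rcases lt_trichotomy j j₀ with hj | hj | hj
      · have : f (i₀, j) = 0 := by simp [hfdef, hj₀min j hj]
        rw [this, abs_zero]
        positivity
      · exact absurd (by rw [hj]) hij
      · obtain ⟨t, rfl⟩ : ∃ t, j = j₀ + 1 + t := ⟨j - (j₀ + 1), by omega⟩
        have hρt : ρ ^ t ≤ (R/2) ^ t := pow_le_pow_left₀ hρ.le hρR2 t
        have harith : i₀ + (j₀ + 1 + t) = (i₀ + j₀ + 1) + t := by omega
        calc |f (i₀, j₀ + 1 + t)|
            = |a (i₀, j₀ + 1 + t)| * (|z| ^ i₀ * (ρ ^ (j₀ + 1) * ρ ^ t)) := by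
              rw [hfdef]
              rw [abs_mul, abs_mul, abs_pow, abs_pow, abs_of_pos hρ, ← pow_add]
              ring
          _ ≤ (C / R ^ (i₀ + (j₀ + 1 + t))) * (|z| ^ i₀ * (ρ ^ (j₀ + 1) * ρ ^ t)) :=
              mul_le_mul_of_nonneg_right (hb _) (by positivity)
          _ ≤ (C / R ^ (i₀ + (j₀ + 1 + t))) * (|z| ^ i₀ * (ρ ^ (j₀ + 1) * (R/2) ^ t)) := by
              apply mul_le_mul_of_nonneg_left _ (by positivity)
              apply mul_le_mul_of_nonneg_left _ (by positivity)
              exact mul_le_mul_of_nonneg_left hρt (by positivity)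
          _ = (C / R ^ ((i₀ + j₀ + 1) + t)) * ((|z| ^ i₀ * ρ ^ (j₀ + 1)) * (R/2) ^ t) := by
              rw [harith]; ring
          _ = (C * (2/R) ^ (i₀ + j₀ + 1) * (|z| ^ i₀ * ρ ^ (j₀ + 1))) * ((1:ℝ)/2) ^ ((i₀ + j₀ + 1) + t) :=
              pow_alg1 C R _ hR.ne' (i₀ + j₀ + 1) t
          _ ≤ E * (((1:ℝ)/2) ^ i₀ * ((1:ℝ)/2) ^ (j₀ + 1 + t)) := by
              rw [hEdef, hE₀def, ← pow_add, ← harith]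
              have h2nn : (0:ℝ) ≤ ((1:ℝ)/2) ^ (i₀ + (j₀ + 1 + t)) := by positivity
              have hxnn : (0:ℝ) ≤ |z| ^ i₀ * ρ ^ (j₀ + 1) := by positivity
              have hpos : (0:ℝ) ≤ C * (2/R) ^ (i₀ + 1) := by positivity
              nlinarith [mul_nonneg (mul_nonneg hpos hxnn) h2nn]
    · obtain ⟨s, rfl⟩ : ∃ s, i = i₀ + 1 + s := ⟨i - (i₀ + 1), by omega⟩
      have hzs : |z| ^ s ≤ (R/2) ^ s := pow_le_pow_left₀ (abs_nonneg z) hzR2 s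
      have hρj : ρ ^ j ≤ (R/2) ^ j := pow_le_pow_left₀ hρ.le hρR2 j
      have harith : (i₀ + 1 + s) + j = (i₀ + 1) + (s + j) := by omega
      calc |f (i₀ + 1 + s, j)|
          = |a (i₀ + 1 + s, j)| * ((|z| ^ i₀ * |z|) * (|z| ^ s * ρ ^ j)) := by
            rw [hfdef]
            rw [abs_mul, abs_mul, abs_pow, abs_pow, abs_of_pos hρ]
            rw [show |z| ^ (i₀ + 1 + s) = |z| ^ i₀ * |z| * |z| ^ s by rw [← pow_succ, ← pow_add]]
            ring
        _ ≤ (C / R ^ ((i₀ + 1 + s) + j)) * ((|z| ^ i₀ * |z|) * (|z| ^ s * ρ ^ j)) :=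
            mul_le_mul_of_nonneg_right (hb _) (by positivity)
        _ ≤ (C / R ^ ((i₀ + 1 + s) + j)) * ((|z| ^ i₀ * ρ ^ (j₀ + 1)) * ((R/2) ^ s * (R/2) ^ j)) := by
            apply mul_le_mul_of_nonneg_left _ (by positivity)
            apply mul_le_mul
            · exact mul_le_mul_of_nonneg_left hzρ (by positivity)
            · exact mul_le_mul hzs hρj (by positivity) (by positivity)
            · positivity
            · positivity
        _ = (C / R ^ ((i₀ + 1) + (s + j))) * ((|z| ^ i₀ * ρ ^ (j₀ + 1)) * (R/2) ^ (s + j)) := by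
            rw [harith, pow_add (R/2)]
        _ = (C * (2/R) ^ (i₀ + 1) * (|z| ^ i₀ * ρ ^ (j₀ + 1))) * ((1:ℝ)/2) ^ ((i₀ + 1) + (s + j)) :=
            pow_alg1 C R _ hR.ne' (i₀ + 1) (s + j)
        _ ≤ E * (((1:ℝ)/2) ^ (i₀ + 1 + s) * ((1:ℝ)/2) ^ j) := by
            rw [hEdef, hE₀def, ← pow_add, ← harith]
            have h2nn : (0:ℝ) ≤ ((1:ℝ)/2) ^ ((i₀ + 1 + s) + j) := by positivity
            have hxnn : (0:ℝ) ≤ |z| ^ i₀ * ρ ^ (j₀ + 1) := by positivity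
            have hpos : (0:ℝ) ≤ C * (2/R) ^ (i₀ + j₀ + 1) := by positivity
            nlinarith [mul_nonneg (mul_nonneg hpos hxnn) h2nn]
  -- sum the bound
  have hgs : Summable (fun ij : ℕ × ℕ => |g ij|) :=
    Summable.of_nonneg_of_le (fun _ => abs_nonneg _) hple (summable_halfpow.mul_left E)
  have hgs' : Summable (fun ij : ℕ × ℕ => ‖g ij‖) :=
    hgs.congr (fun ij => (Real.norm_eq_abs _).symm)
  have hErr : |F (z, ρ) - f (i₀, j₀)| ≤ K' * (|z| ^ i₀ * ρ ^ (j₀ + 1)) := by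
    calc |F (z, ρ) - f (i₀, j₀)| = ‖∑' ij : ℕ × ℕ, g ij‖ := by
          rw [hgsum.tsum_eq, Real.norm_eq_abs]
      _ ≤ ∑' ij : ℕ × ℕ, ‖g ij‖ := norm_tsum_le_tsum_norm hgs'
      _ ≤ ∑' ij : ℕ × ℕ, E * (((1:ℝ)/2) ^ ij.1 * ((1:ℝ)/2) ^ ij.2) :=
          Summable.tsum_le_tsum (fun ij => by rw [Real.norm_eq_abs]; exact hple ij) hgs'
            (summable_halfpow.mul_left E)
      _ = E * 4 := by rw [tsum_mul_left, tsum_halfpow]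
      _ = K' * (|z| ^ i₀ * ρ ^ (j₀ + 1)) := by rw [hK'def, hEdef]; ring
  -- conclude positivity
  have hεa : ε * a (i₀, j₀) = A := by
    rw [hεdef, hAdef]
    split_ifs with h
    · rw [one_mul, abs_of_pos h]
    · have hneg : a (i₀, j₀) < 0 := lt_of_le_of_ne (not_lt.mp h) ha₀
      rw [abs_of_neg hneg]
      ring
  have hw : z ^ i₀ ≠ 0 := pow_ne_zero _ hz0
  have hw2 : 0 < (z ^ i₀) ^ 2 := lt_of_le_of_ne (sq_nonneg _) (Ne.symm (pow_ne_zero 2 hw))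
  have habs_pow : |z| ^ i₀ = |z ^ i₀| := (abs_pow z i₀).symm
  have hKρA : K' * ρ < A := by
    have h1 : K' * ρ < K' * (A / (K' + 1)) := by
      exact mul_lt_mul_of_pos_left hρA hK'
    have h2 : K' * (A / (K' + 1)) < A := by
      rw [mul_comm, div_mul_eq_mul_div, div_lt_iff₀ (by positivity)]
      nlinarith
    linarith
  set Err := F (z, ρ) - f (i₀, j₀) with hErrdef
  have hFval : F (z, ρ) = f (i₀, j₀) + Err := by rw [hErrdef]; ring
  have hfc : f (i₀, j₀) = a (i₀, j₀) * z ^ i₀ * ρ ^ j₀ := rfl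
  have hmain : ε * z ^ i₀ * F (z, ρ)
      = A * ((z ^ i₀) ^ 2 * ρ ^ j₀) + ε * z ^ i₀ * Err := by
    rw [hFval, hfc, ← hεa]
    ring
  have habsε : |ε| = 1 := by
    rw [hεdef]
    split_ifs <;> simp
  have herr2 : |ε * z ^ i₀ * Err| ≤ K' * ρ * ((z ^ i₀) ^ 2 * ρ ^ j₀) := by
    calc |ε * z ^ i₀ * Err| = |ε| * |z ^ i₀| * |Err| := by rw [abs_mul, abs_mul]
      _ = |z ^ i₀| * |Err| := by rw [habsε, one_mul]
      _ ≤ |z ^ i₀| * (K' * (|z| ^ i₀ * ρ ^ (j₀ + 1))) :=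
          mul_le_mul_of_nonneg_left hErr (abs_nonneg _)
      _ = K' * ρ * ((z ^ i₀) ^ 2 * ρ ^ j₀) := by
          rw [habs_pow, ← sq_abs (z ^ i₀), pow_succ]
          ring
  have hWpos : 0 < (z ^ i₀) ^ 2 * ρ ^ j₀ := mul_pos hw2 (by positivity)
  have hfinal : 0 < (A - K' * ρ) * ((z ^ i₀) ^ 2 * ρ ^ j₀) :=
    mul_pos (by linarith) hWpos
  have hlow : -(K' * ρ * ((z ^ i₀) ^ 2 * ρ ^ j₀)) ≤ ε * z ^ i₀ * Err :=
    neg_le_of_abs_le herr2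
  rw [hmain]
  nlinarith
/-- The conic neighborhood `Σ_{N,δ} = {(z,ρ) : |z| < ρᴺ, 0 < ρ < δ}` in coordinates
`(z, ρ)`. -/
def cone (N : ℕ) (δ : ℝ) : Set (ℝ × ℝ) :=
  {q : ℝ × ℝ | |q.1| < q.2 ^ N ∧ 0 < q.2 ∧ q.2 < δ}

/-- **Periodic orbits in a cone around a curve of fixed points are fixed points on the
curve** (Lemma 5.8): if `P` is real-analytic on a connected open neighborhood `U` of
`0 ∈ ℝ²`, fixes both coordinate axes pointwise (where they meet `U`), and is not the
identity of `U`, then there are `N` and `δ > 0` such that every periodic orbit of `P`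
contained in `Σ_{N,δ}` consists of points with `z`-coordinate `0` (hence fixed points). -/
theorem periodic_orbits_in_cone_fixed_curve
    (U : Set (ℝ × ℝ)) (hUopen : IsOpen U) (hUconn : IsConnected U)
    (hU0 : ((0, 0) : ℝ × ℝ) ∈ U)
    (P : ℝ × ℝ → ℝ × ℝ) (hP : AnalyticOnNhd ℝ P U)
    (hfixz : ∀ z : ℝ, ((z, (0 : ℝ)) ∈ U) → P (z, 0) = (z, 0))
    (hfixρ : ∀ ρ : ℝ, (((0 : ℝ), ρ) ∈ U) → P (0, ρ) = (0, ρ))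
    (hPneId : ¬ ∀ p ∈ U, P p = p) :
    ∃ (N : ℕ) (δ : ℝ), 0 < δ ∧
      ∀ (m : ℕ) (p : ℕ → ℝ × ℝ), 0 < m →
        (∀ i < m, p i ∈ cone N δ) → (∀ i < m, P (p i) = p (i + 1)) → p m = p 0 →
        ∀ i < m, (p i).1 = 0 := by
  classical
  obtain ⟨εU, hεU, hball⟩ := Metric.isOpen_iff.mp hUopen _ hU0
  have hmemU : ∀ w : ℝ × ℝ, ‖w‖ < εU → w ∈ U := by
    intro w hw
    apply hball
    rw [Metric.mem_ball, Prod.mk_zero_zero, dist_zero_right]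
    exact hw
  set G₁ : ℝ × ℝ → ℝ := fun q => (P q).1 - q.1 with hG1def
  set G₂ : ℝ × ℝ → ℝ := fun q => (P q).2 - q.2 with hG2def
  have hPa : AnalyticAt ℝ P (0, 0) := hP _ hU0
  have hG1a : AnalyticAt ℝ G₁ (0, 0) := by
    have h1 : AnalyticAt ℝ (fun q : ℝ × ℝ => (P q).1) (0, 0) :=
      ((ContinuousLinearMap.fst ℝ ℝ ℝ).analyticAt (P (0, 0))).comp hPa
    have h2 : AnalyticAt ℝ (fun q : ℝ × ℝ => q.1) (0, 0) :=
      (ContinuousLinearMap.fst ℝ ℝ ℝ).analyticAt ((0, 0) : ℝ × ℝ)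
    exact h1.sub h2
  have hG2a : AnalyticAt ℝ G₂ (0, 0) := by
    have h1 : AnalyticAt ℝ (fun q : ℝ × ℝ => (P q).2) (0, 0) :=
      ((ContinuousLinearMap.snd ℝ ℝ ℝ).analyticAt (P (0, 0))).comp hPa
    have h2 : AnalyticAt ℝ (fun q : ℝ × ℝ => q.2) (0, 0) :=
      (ContinuousLinearMap.snd ℝ ℝ ℝ).analyticAt ((0, 0) : ℝ × ℝ)
    exact h1.sub h2
  obtain ⟨a1, C1, R1, hC1, hR1, hb1, hsum1⟩ := exists_rep hG1a
  obtain ⟨a2, C2, R2, hC2, hR2, hb2, hsum2⟩ := exists_rep hG2a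
  -- points on the axes near 0 are in U
  have hUz : ∀ z : ℝ, |z| < εU → ((z, (0:ℝ)) ∈ U) := by
    intro z hz
    apply hmemU
    rw [Prod.norm_def]
    simp only [Real.norm_eq_abs, abs_zero]
    rw [max_eq_left (abs_nonneg z)]
    exact hz
  have hUρ : ∀ ρ : ℝ, |ρ| < εU → (((0:ℝ), ρ) ∈ U) := by
    intro ρ hρ
    apply hmemU
    rw [Prod.norm_def]
    simp only [Real.norm_eq_abs, abs_zero]
    rw [max_eq_right (abs_nonneg ρ)]
    exact hρ
  have hz1 : ∀ z : ℝ, |z| < εU → G₁ (z, 0) = 0 := by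
    intro z hz
    rw [hG1def]
    simp only [hfixz z (hUz z hz)]
    ring
  have hz2 : ∀ z : ℝ, |z| < εU → G₂ (z, 0) = 0 := by
    intro z hz
    rw [hG2def]
    simp only [hfixz z (hUz z hz)]
    ring
  have hρ1 : ∀ ρ : ℝ, |ρ| < εU → G₁ (0, ρ) = 0 := by
    intro ρ hρ
    rw [hG1def]
    simp only [hfixρ ρ (hUρ ρ hρ)]
    ring
  have hρ2 : ∀ ρ : ℝ, |ρ| < εU → G₂ (0, ρ) = 0 := by
    intro ρ hρ
    rw [hG2def]
    simp only [hfixρ ρ (hUρ ρ hρ)]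
    ring
  have ha1_0 : ∀ i, a1 (i, 0) = 0 := rep_coeff_fst_zero hC1 hR1 hb1 hsum1 hεU hz1
  have h0a1 : ∀ j, a1 (0, j) = 0 := rep_coeff_snd_zero hC1 hR1 hb1 hsum1 hεU hρ1
  have ha2_0 : ∀ i, a2 (i, 0) = 0 := rep_coeff_fst_zero hC2 hR2 hb2 hsum2 hεU hz2
  have h0a2 : ∀ j, a2 (0, j) = 0 := rep_coeff_snd_zero hC2 hR2 hb2 hsum2 hεU hρ2
  obtain ⟨K₁, hK₁, hbound1⟩ := rep_bound hC1 hR1 hb1 hsum1 ha1_0 h0a1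
  -- select a component with a nonzero coefficient
  have hKEY : ∃ (pc : ℝ × ℝ → ℝ) (N k : ℕ) (δs ε : ℝ), 0 < N ∧ 0 < δs ∧ δs ≤ 1 ∧
      ∀ z ρ : ℝ, |z| < ρ ^ N → 0 < ρ → ρ < δs → z ≠ 0 →
        0 < ε * z ^ k * (pc (P (z, ρ)) - pc (z, ρ)) := by
    by_cases h1 : ∃ ij : ℕ × ℕ, a1 ij ≠ 0
    · obtain ⟨N, k, δs, ε, hN, hδs, hδs1, hsgn⟩ := rep_sign hC1 hR1 hb1 hsum1 h1
      refine ⟨Prod.fst, N, k, δs, ε, hN, hδs, hδs1, fun z ρ ha hb' hc hd => ?_⟩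
      have := hsgn z ρ ha hb' hc hd
      simpa [hG1def] using this
    by_cases h2 : ∃ ij : ℕ × ℕ, a2 ij ≠ 0
    · obtain ⟨N, k, δs, ε, hN, hδs, hδs1, hsgn⟩ := rep_sign hC2 hR2 hb2 hsum2 h2
      refine ⟨Prod.snd, N, k, δs, ε, hN, hδs, hδs1, fun z ρ ha hb' hc hd => ?_⟩
      have := hsgn z ρ ha hb' hc hd
      simpa [hG2def] using this
    · exfalso
      push_neg at h1 h2
      have hzero1 := rep_zero_fun hR1 hsum1 h1
      have hzero2 := rep_zero_fun hR2 hsum2 h2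
      have hev : (fun q : ℝ × ℝ => P q - q) =ᶠ[nhds ((0, 0) : ℝ × ℝ)] 0 := by
        have hmem : Metric.ball ((0, 0) : ℝ × ℝ) (min R1 R2) ∈ nhds ((0, 0) : ℝ × ℝ) :=
          Metric.ball_mem_nhds _ (lt_min hR1 hR2)
        filter_upwards [hmem] with q hq
        rw [Metric.mem_ball, Prod.mk_zero_zero, dist_zero_right, Prod.norm_def] at hq
        simp only [Real.norm_eq_abs] at hq
        have hq1 : |q.1| < R1 := lt_of_le_of_lt (le_max_left _ _)
          (lt_of_lt_of_le hq (min_le_left _ _))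
        have hq2 : |q.2| < R2 := lt_of_le_of_lt (le_max_right _ _)
          (lt_of_lt_of_le hq (min_le_right _ _))
        have hq1' : |q.1| < min R1 R2 := lt_of_le_of_lt (le_max_left _ _) hq
        have hq2' : |q.2| < min R1 R2 := lt_of_le_of_lt (le_max_right _ _) hq
        have e1 : G₁ (q.1, q.2) = 0 :=
          hzero1 q.1 q.2 (lt_of_lt_of_le hq1' (min_le_left _ _))
            (lt_of_lt_of_le hq2' (min_le_left _ _))
        have e2 : G₂ (q.1, q.2) = 0 :=
          hzero2 q.1 q.2 (lt_of_lt_of_le hq1' (min_le_right _ _))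
            (lt_of_lt_of_le hq2' (min_le_right _ _))
        rw [Prod.mk.eta] at e1 e2
        rw [hG1def] at e1
        rw [hG2def] at e2
        have : P q = q := by
          apply Prod.ext
          · simpa [sub_eq_zero] using e1
          · simpa [sub_eq_zero] using e2
        simp [this]
      have hGan : AnalyticOnNhd ℝ (fun q : ℝ × ℝ => P q - q) U := hP.sub analyticOnNhd_id
      have hEq := hGan.eqOn_zero_of_preconnected_of_eventuallyEq_zero
        hUconn.isPreconnected hU0 hev
      apply hPneId
      intro q hq
      have hq0 : P q - q = 0 := hEq hq
      rwa [sub_eq_zero] at hq0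
  obtain ⟨pc, N, k, δs, ε, hN, hδs, hδs1, hsgn⟩ := hKEY
  set δ : ℝ := min (min δs εU) (min (min 1 (R1 / 2)) (1 / (K₁ + 1))) with hδdef
  have hδδs : δ ≤ δs := le_trans (min_le_left _ _) (min_le_left _ _)
  have hδεU : δ ≤ εU := le_trans (min_le_left _ _) (min_le_right _ _)
  have hδ1 : δ ≤ 1 := le_trans (min_le_right _ _) (le_trans (min_le_left _ _) (min_le_left _ _))
  have hδR12 : δ ≤ R1 / 2 :=
    le_trans (min_le_right _ _) (le_trans (min_le_left _ _) (min_le_right _ _))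
  have hδK : δ ≤ 1 / (K₁ + 1) := le_trans (min_le_right _ _) (min_le_right _ _)
  have hδpos : 0 < δ :=
    lt_min (lt_min hδs hεU) (lt_min (lt_min one_pos (by positivity)) (by positivity))
  refine ⟨N, δ, hδpos, ?_⟩
  intro m p hm hcone horb hper
  -- basic facts about cone points
  have hfacts : ∀ i, i < m → |(p i).1| ≤ (p i).2 ∧ 0 < (p i).2 ∧ (p i).2 < δ ∧ p i ∈ U := by
    intro i him
    obtain ⟨hq1, hq2, hq3⟩ := hcone i him
    have hq21 : (p i).2 ≤ 1 := le_of_lt (lt_of_lt_of_le hq3 hδ1)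
    have hpow : (p i).2 ^ N ≤ (p i).2 := pow_le_of_le_one hq2.le hq21 hN.ne'
    have h1 : |(p i).1| ≤ (p i).2 := le_trans hq1.le hpow
    refine ⟨h1, hq2, hq3, ?_⟩
    apply hmemU
    rw [Prod.norm_def]
    simp only [Real.norm_eq_abs]
    apply max_lt (lt_of_le_of_lt h1 (lt_of_lt_of_le hq3 hδεU))
    rw [abs_of_pos hq2]
    exact lt_of_lt_of_le hq3 hδεU
  by_cases hz0 : (p 0).1 = 0
  · -- the orbit is a single fixed point on the axis
    have hconst : ∀ i, i ≤ m → p i = p 0 := by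
      intro i
      induction i with
      | zero => intro _; rfl
      | succ n ihn =>
        intro hsm
        have hnm : n < m := by omega
        have hpn : p n = p 0 := ihn (by omega)
        have h1 : (p n).1 = 0 := by rw [hpn]; exact hz0
        have hmem : p n ∈ U := (hfacts n hnm).2.2.2
        have heq : p n = ((0:ℝ), (p n).2) := by
          rw [← h1]
        have hPfix : P (p n) = p n := by
          calc P (p n) = P (0, (p n).2) := by rw [← heq]
            _ = (0, (p n).2) := hfixρ _ (heq ▸ hmem)
            _ = p n := heq.symm
        calc p (n + 1) = P (p n) := (horb n hnm).symm
          _ = p n := hPfix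
          _ = p 0 := hpn
    intro i him
    rw [hconst i him.le]
    exact hz0
  · exfalso
    -- the sign of the first coordinate is constant along the orbit
    have hsignchain : ∀ i, i ≤ m → 0 < (p i).1 * (p 0).1 := by
      intro i
      induction i with
      | zero => intro _; exact mul_self_pos.mpr hz0
      | succ n ihn =>
        intro hsm
        have hnm : n < m := by omega
        have hin : 0 < (p n).1 * (p 0).1 := ihn (by omega)
        have hzn : (p n).1 ≠ 0 := by
          intro h
          rw [h, zero_mul] at hin
          exact lt_irrefl 0 hin
        obtain ⟨hf1, hf2, hf3, _⟩ := hfacts n hnm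
        have hG1b : |G₁ (p n)| ≤ K₁ * (|(p n).1| * (p n).2) := by
          have := hbound1 (p n).1 (p n).2 hf1 hf2 (le_trans hf3.le hδR12)
          rwa [Prod.mk.eta] at this
        have hKρ : K₁ * (p n).2 < 1 := by
          have h1 : (p n).2 < 1 / (K₁ + 1) := lt_of_lt_of_le hf3 hδK
          rw [lt_div_iff₀ (by positivity)] at h1
          nlinarith
        have habs : |G₁ (p n)| < |(p n).1| := by
          have h2 : K₁ * (|(p n).1| * (p n).2) < |(p n).1| := by
            have h3 : 0 < |(p n).1| := abs_pos.mpr hzn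
            nlinarith
          linarith
        have hz1' : (p (n + 1)).1 = (p n).1 + G₁ (p n) := by
          rw [← horb n hnm, hG1def]
          ring
        have hstep : 0 < (p (n + 1)).1 * (p n).1 := by
          have hh1 : -(|G₁ (p n)| * |(p n).1|) ≤ G₁ (p n) * (p n).1 := by
            rw [← abs_mul]
            exact neg_abs_le _
          have hh2 : |G₁ (p n)| * |(p n).1| < |(p n).1| * |(p n).1| :=
            mul_lt_mul_of_pos_right habs (abs_pos.mpr hzn)
          have hh3 : |(p n).1| * |(p n).1| = (p n).1 * (p n).1 := abs_mul_abs_self _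
          rw [hz1']
          nlinarith
        have hzn2 : 0 < (p n).1 * (p n).1 := mul_self_pos.mpr hzn
        nlinarith [mul_pos hstep hin]
    -- telescoping sum of the chosen coordinate
    have htel : ∑ i ∈ Finset.range m, (pc (p (i + 1)) - pc (p i)) = 0 := by
      rw [Finset.sum_range_sub (fun i => pc (p i)) m, hper, sub_self]
    have hpos : ∀ i ∈ Finset.range m,
        0 < (ε * (p 0).1 ^ k) * (pc (p (i + 1)) - pc (p i)) := by
      intro i hi
      have him : i < m := Finset.mem_range.mp hi
      obtain ⟨hq1, hq2, hq3⟩ := hcone i him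
      have hchain := hsignchain i him.le
      have hzi : (p i).1 ≠ 0 := by
        intro h
        rw [h, zero_mul] at hchain
        exact lt_irrefl 0 hchain
      have hsg := hsgn (p i).1 (p i).2 hq1 hq2 (lt_of_lt_of_le hq3 hδδs) hzi
      rw [Prod.mk.eta, horb i him] at hsg
      have hdivpos : 0 < (p 0).1 / (p i).1 := by
        rcases mul_pos_iff.mp hchain with ⟨ha, hb'⟩ | ⟨ha, hb'⟩
        · exact div_pos hb' ha
        · exact div_pos_of_neg_of_neg hb' ha
      have hratio : 0 < ((p 0).1 / (p i).1) ^ k := pow_pos hdivpos k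
      have hkey : ε * (p 0).1 ^ k * (pc (p (i + 1)) - pc (p i))
          = (ε * (p i).1 ^ k * (pc (p (i + 1)) - pc (p i))) * ((p 0).1 / (p i).1) ^ k := by
        have hzik : (p i).1 ^ k ≠ 0 := pow_ne_zero _ hzi
        rw [div_pow]
        field_simp [hzik]
      rw [hkey]
      exact mul_pos hsg hratio
    have hsum := Finset.sum_pos hpos (Finset.nonempty_range_iff.mpr hm.ne')
    rw [← Finset.mul_sum, htel, mul_zero] at hsum
    exact lt_irrefl 0 hsum
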